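/- Let x be a minimal deviation of T with support X, let q ∈ X be a check node, and let p be the unique child variable node of q with x_p = 1. If p is not a leaf of T, then every child check node of p belongs to X; in particular q has at least one grandchild check node lying in X. -/
import Mathlib


open SimpleGraph Finset

/-- In the tree `T` rooted at `n`, `v` is a child of `u`. -/
def IsChild {V : Type} (T : SimpleGraph V) (n u v : V) : Prop :=
  T.Adj u v ∧ T.dist v n = T.dist u n + 1

/-- A `T`-codeword: a map on the variable nodes `P` (encoded as a map on all vertices
vanishing off `P`) such that, at every check node, the sum of the values of its
variable neighbors is `0` in `ZMod 2`. -/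
def IsCodeword {V : Type} (T : SimpleGraph V) [Fintype V] [DecidableRel T.Adj]
    (P : Set V) (x : V → ZMod 2) : Prop :=
  (∀ v, v ∉ P → x v = 0) ∧
  ∀ q, q ∉ P → ∑ p ∈ T.neighborFinset q, x p = 0

/-- `x` covers `y` : every variable node where `y` is `1` also has `x` equal to `1`. -/
def Covers {V : Type} (P : Set V) (x y : V → ZMod 2) : Prop :=
  ∀ p ∈ P, y p = 1 → x p = 1

/-- A minimal deviation: a `T`-codeword `x` with `x n = 1` such that the only nonzero
`T`-codeword covered by `x` is `x` itself. -/
def IsMinimalDeviation {V : Type} (T : SimpleGraph V) [Fintype V] [DecidableRel T.Adj]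
    (P : Set V) (n : V) (x : V → ZMod 2) : Prop :=
  IsCodeword T P x ∧ x n = 1 ∧
  ∀ y, IsCodeword T P y → Covers P x y → y ≠ 0 → y = x

/-- The support of a `T`-codeword `x`: the variable nodes `p` with `x p = 1` together
with all check nodes adjacent to at least one such variable node. -/
def Support {V : Type} (T : SimpleGraph V) (P : Set V) (x : V → ZMod 2) : Set V :=
  {v | (v ∈ P ∧ x v = 1) ∨ (v ∉ P ∧ ∃ p ∈ P, T.Adj v p ∧ x p = 1)}


private lemma child_of_ne_parent {V : Type} (T : SimpleGraph V) (hT : T.IsTree)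
    (n q p q' : V) (hqp : T.Adj q p) (hd : T.dist p n = T.dist q n + 1)
    (hadj : T.Adj p q') (hne : q' ≠ q) : T.dist q' n = T.dist p n + 1 := by
  classical
  have hconn := hT.isConnected
  -- upper bound
  obtain ⟨wp, hwp⟩ := hconn.exists_walk_length_eq_dist p n
  have hub : T.dist q' n ≤ T.dist p n + 1 := by
    have := dist_le (Walk.cons hadj.symm wp)
    simpa [hwp] using this
  -- lower bound
  have hlb : ¬ T.dist q' n ≤ T.dist p n := by
    intro hle
    obtain ⟨w1, hw1⟩ := hconn.exists_walk_length_eq_dist q n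
    obtain ⟨w2, hw2⟩ := hconn.exists_walk_length_eq_dist q' n
    have hp1 : p ∉ w1.support := by
      intro hmem
      have h1 : T.dist p n ≤ (w1.dropUntil p hmem).length := dist_le _
      have h2 : (w1.takeUntil p hmem).length + (w1.dropUntil p hmem).length = w1.length := by
        rw [← Walk.length_append, Walk.take_spec]
      omega
    have hp2 : p ∉ w2.support := by
      intro hmem
      have h1 : T.dist p n ≤ (w2.dropUntil p hmem).length := dist_le _
      have h2 : (w2.takeUntil p hmem).length + (w2.dropUntil p hmem).length = w2.length := by
        rw [← Walk.length_append, Walk.take_spec]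
      have h3 : (w2.takeUntil p hmem).length = 0 := by omega
      exact hadj.ne (Walk.eq_of_length_eq_zero h3).symm
    have hp1b : p ∉ w1.bypass.support := fun h => hp1 (Walk.support_bypass_subset _ h)
    have hp2b : p ∉ w2.bypass.support := fun h => hp2 (Walk.support_bypass_subset _ h)
    have path1 : (Walk.cons hqp.symm w1.bypass).IsPath :=
      (Walk.bypass_isPath w1).cons hp1b
    have path2 : (Walk.cons hadj w2.bypass).IsPath :=
      (Walk.bypass_isPath w2).cons hp2b
    have := hT.IsAcyclic.path_unique ⟨_, path1⟩ ⟨_, path2⟩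
    have hwalk : (Walk.cons hqp.symm w1.bypass) = (Walk.cons hadj w2.bypass) :=
      congrArg Subtype.val this
    have := congrArg (fun w => w.getVert 1) hwalk
    simp only [Walk.getVert_cons_succ, Walk.getVert_zero] at this
    exact hne this.symm
  omega

/-- let `x` be a minimal deviation with support `X`, `q ∈ X` a check
node, and `p` the (unique) child variable node of `q` with `x p = 1`.  If `p` is not a
leaf of `T` (its degree is not `1`), then every child check node of `p` belongs to
`X`; in particular `q` has at least one grandchild check node lying in `X`. -/
theorem minimal_deviation_descends {V : Type} [Fintype V]
    (T : SimpleGraph V) [DecidableRel T.Adj] (hT : T.IsTree)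
    (P : Set V) (hbip : ∀ u v, T.Adj u v → (u ∈ P ↔ v ∉ P))
    (n : V) (hn : n ∈ P)
    (x : V → ZMod 2) (hx : IsMinimalDeviation T P n x)
    (q : V) (hq : q ∈ Support T P x) (hqP : q ∉ P)
    (p : V) (hchild : IsChild T n q p) (hxp : x p = 1)
    (hnotleaf : T.degree p ≠ 1) :
    (∀ q', IsChild T n p q' → q' ∈ Support T P x) ∧
    (∃ q', q' ∉ P ∧ IsChild T n p q' ∧ q' ∈ Support T P x) := by
  classical
  have hpP : p ∈ P := by
    by_contra hpnP
    exact hpnP (((hbip q p hchild.1).not_left).mp (by simpa using hqP))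
  have hmem : ∀ q', IsChild T n p q' → q' ∈ Support T P x := by
    intro q' hc
    have hq'P : q' ∉ P := (hbip p q' hc.1).mp hpP
    exact Or.inr ⟨hq'P, p, hpP, hc.1.symm, hxp⟩
  refine ⟨hmem, ?_⟩
  -- find a neighbor of p other than q
  have hqmem : q ∈ T.neighborFinset p := by
    simp [hchild.1.symm]
  have hdeg2 : 2 ≤ T.degree p := by
    have h1 : 1 ≤ T.degree p := by
      rw [← card_neighborFinset_eq_degree]
      exact Finset.card_pos.mpr ⟨q, hqmem⟩
    omega
  obtain ⟨q', hq'mem, hq'ne⟩ : ∃ q' ∈ T.neighborFinset p, q' ≠ q := by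
    by_contra hcon
    push_neg at hcon
    have : T.neighborFinset p ⊆ {q} := fun v hv => Finset.mem_singleton.mpr (hcon v hv)
    have := Finset.card_le_card this
    rw [card_neighborFinset_eq_degree] at this
    simp at this
    omega
  have hadj : T.Adj p q' := by simpa using hq'mem
  have hc : IsChild T n p q' :=
    ⟨hadj, child_of_ne_parent T hT n q p q' hchild.1 hchild.2 hadj hq'ne⟩
  exact ⟨q', (hbip p q' hadj).mp hpP, hc, hmem q' hc⟩
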